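/- arXiv:1505.01780 — 3 statements merged into one kernel-verified Lean document; each statement's English description precedes it below -/
import Mathlib

section
/- Assume moreover that the Gram matrix M_f is invertible (i.e. f is non-degenerate). Let x_1,...,x_k be linearly independent vectors of F^N (2 ≤ k ≤ N) and let X = X(x_1,...,x_k) be their Plücker tensor. Then X^σ ∘ M_f ∘ X = O, where O is the null tensor of degree 2k−2, if and only if the subspace ⟨x_1,...,x_k⟩ is totally f-isotropic. -/
open scoped BigOperators Matrix

/-- A tensor of degree `r` over `F` in dimension `N`. -/
abbrev Tensor (F : Type*) (N r : ℕ) := (Fin r → Fin N) → F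

namespace Tensor

variable {F : Type*} [Field F] {N : ℕ}

/-- The `p`-product of a tensor of degree `r` with a tensor of degree `s`. -/
def pProd {r s p : ℕ} (X : Tensor F N r) (Y : Tensor F N s)
    (hpr : p ≤ r) (hps : p ≤ s) : Tensor F N ((r - p) + (s - p)) :=
  fun idx => ∑ h : Fin p → Fin N,
    X (fun i => if hi : (i : ℕ) < r - p then idx ⟨i, by omega⟩
        else h ⟨(i : ℕ) - (r - p), by have := i.isLt; omega⟩) *
    Y (fun j => if hj : (j : ℕ) < p then h ⟨j, hj⟩
        else idx ⟨(r - p) + ((j : ℕ) - p), by have := j.isLt; omega⟩)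

/-- The tensor product of two tensors. -/
def tProd {r s : ℕ} (X : Tensor F N r) (Y : Tensor F N s) : Tensor F N (r + s) :=
  fun idx => X (fun i => idx ⟨i, by have := i.isLt; omega⟩) *
             Y (fun j => idx ⟨r + (j : ℕ), by have := j.isLt; omega⟩)

/-- The pseudo-tensor product `X ⊙ Y` of tensors of even degrees `2u` and `2v`. -/
def pseudoProd {u v : ℕ} (X : Tensor F N (2 * u)) (Y : Tensor F N (2 * v)) :
    Tensor F N (2 * (u + v)) :=
  fun idx =>
    X (fun i => if _ : (i : ℕ) < u then idx ⟨i, by have := i.isLt; omega⟩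
        else idx ⟨u + v + ((i : ℕ) - u), by have := i.isLt; omega⟩) *
    Y (fun j => if _ : (j : ℕ) < v then idx ⟨u + (j : ℕ), by have := j.isLt; omega⟩
        else idx ⟨2 * u + v + ((j : ℕ) - v), by have := j.isLt; omega⟩)

/-- A matrix regarded as a tensor of degree `2`. -/
def ofMat (M : Matrix (Fin N) (Fin N) F) : Tensor F N 2 := fun idx => M (idx 0) (idx 1)

/-- A vector regarded as a tensor of degree `1`. -/
def ofVec (v : Fin N → F) : Tensor F N 1 := fun idx => v (idx 0)

/-- Pseudo-tensor powers `⊙^r A` of a matrix (tensor of degree 2): `⊙^1 A = A`,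
`⊙^(r+1) A = (⊙^r A) ⊙ A`. -/
def pPow (A : Tensor F N 2) : (r : ℕ) → Tensor F N (2 * r)
  | 0 => fun _ => 1
  | r + 1 => pseudoProd (u := r) (v := 1) (pPow A r) A

/-- Recasting a tensor along an equality of degrees. -/
def cast {r r' : ℕ} (h : r = r') (X : Tensor F N r) : Tensor F N r' :=
  fun idx => X (fun i => idx (Fin.cast h i))

/-- Applying a map `g : F → F` to every entry of a tensor. -/
def map (g : F → F) {r : ℕ} (X : Tensor F N r) : Tensor F N r := fun idx => g (X idx)

/-- The Plücker tensor of `k` vectors of `F^N`: the alternating tensor of degree `k`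
whose entry at `(i_1, …, i_k)` is the determinant of the `k × k` matrix whose `(r,s)`
entry is the `i_r`-th coordinate of `x_s`. It represents `x_1 ∧ ⋯ ∧ x_k`. -/
def plucker {k : ℕ} (x : Fin k → Fin N → F) : Tensor F N k :=
  fun idx => Matrix.det (Matrix.of fun r s => x s (idx r))

/-- The `(σ, ε)`-sesquilinear form on `F^N` with Gram matrix `M`. -/
def sesq (σ : F → F) (M : Matrix (Fin N) (Fin N) F) (v w : Fin N → F) : F :=
  ∑ i, ∑ j, σ (v i) * M i j * w j

end Tensor

section Aux
variable {F : Type*} [Field F] {N : ℕ}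

open Tensor

open Matrix in
lemma aux_exists_rows {F : Type*} [Field F] {N k : ℕ} (x : Fin k → Fin N → F)
    (hx : LinearIndependent F x) :
    ∃ ρ : Fin k → Fin N, IsUnit (Matrix.of fun r s => x s (ρ r)) := by
  classical
  set A : Matrix (Fin k) (Fin N) F := Matrix.of fun s i => x s i with hA
  have hrows : LinearIndependent F (fun s => A s) := hx
  have hrank : A.rank = k := by simpa using hrows.rank_matrix
  have hrankT : Aᵀ.rank = k := by rw [Matrix.rank_transpose]; exact hrank
  have hspan : Submodule.span F (Set.range Aᵀ) = ⊤ := by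
    have h1 : Aᵀ.rank = Module.finrank F (Submodule.span F (Set.range Aᵀ)) :=
      Matrix.rank_eq_finrank_span_row Aᵀ
    apply Submodule.eq_top_of_finrank_eq
    rw [← h1, hrankT]
    simp [Module.finrank_pi]
  obtain ⟨b, hbsub, hbspan, hbind⟩ := exists_linearIndependent F (Set.range Aᵀ)
  rw [hspan] at hbspan
  haveI : Fintype b := hbind.setFinite.fintype
  let bas : Module.Basis b F (Fin k → F) := Module.Basis.mk hbind (by rw [Subtype.range_coe]; exact hbspan.ge)
  have hcard : Fintype.card b = k := by
    have := Module.finrank_eq_card_basis bas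
    simpa [Module.finrank_pi] using this.symm
  let e : Fin k ≃ b := (Fintype.equivFinOfCardEq hcard).symm
  choose ρ hρ using fun r : Fin k => hbsub (e r).2
  refine ⟨ρ, ?_⟩
  rw [← Matrix.linearIndependent_rows_iff_isUnit]
  have heq : (fun r : Fin k => (Matrix.of fun r s => x s (ρ r)) r) = fun r => ((e r : Fin k → F)) := by
    funext r
    exact hρ r
  show LinearIndependent F (fun r : Fin k => (Matrix.of fun r s => x s (ρ r)) r); rw [heq]
  exact hbind.comp e e.injective

lemma aux_sesq_span {k : ℕ} (σ : F →+* F) (M : Matrix (Fin N) (Fin N) F) (x : Fin k → Fin N → F)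
    (h : ∀ s t, sesq σ M (x s) (x t) = 0) :
    ∀ w₁ ∈ Submodule.span F (Set.range x), ∀ w₂ ∈ Submodule.span F (Set.range x),
      sesq σ M w₁ w₂ = 0 := by
  intro w₁ h₁ w₂ h₂
  induction h₁, h₂ using Submodule.span_induction₂ with
  | mem_mem u v hu hv =>
    obtain ⟨s, rfl⟩ := hu; obtain ⟨t, rfl⟩ := hv; exact h s t
  | zero_left v hv => simp [sesq]
  | zero_right u hu => simp [sesq]
  | add_left u v w hu hv hw h1 h2 =>
    have : sesq (⇑σ) M (u + v) w = sesq σ M u w + sesq σ M v w := by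
      simp [sesq, map_add, add_mul, Finset.sum_add_distrib]
    rw [this, h1, h2, add_zero]
  | add_right u v w hu hv hw h1 h2 =>
    have : sesq (⇑σ) M u (v + w) = sesq σ M u v + sesq σ M u w := by
      simp [sesq, mul_add, Finset.sum_add_distrib]
    rw [this, h1, h2, add_zero]
  | smul_left c u v hu hv h1 =>
    have : sesq (⇑σ) M (c • u) v = σ c * sesq σ M u v := by
      simp only [sesq, Finset.mul_sum, Pi.smul_apply, smul_eq_mul, map_mul]
      exact Finset.sum_congr rfl fun i _ => Finset.sum_congr rfl fun j _ => by ring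
    rw [this, h1, mul_zero]
  | smul_right c u v hu hv h1 =>
    have : sesq (⇑σ) M u (c • v) = c * sesq σ M u v := by
      simp only [sesq, Finset.mul_sum, Pi.smul_apply, smul_eq_mul]
      exact Finset.sum_congr rfl fun i _ => Finset.sum_congr rfl fun j _ => by ring
    rw [this, h1, mul_zero]


lemma aux_T_apply {m : ℕ} (σ : F →+* F) (M : Matrix (Fin N) (Fin N) F)
    (x : Fin (m+1) → Fin N → F) (idx : Fin (m + m) → Fin N) :
    Tensor.pProd (p := 1)
        (Tensor.pProd (p := 1) (Tensor.map σ (Tensor.plucker x)) (Tensor.ofMat M)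
          (by omega) (by omega))
        (Tensor.plucker x) (by omega) (by omega) idx
    = ∑ b : Fin N, ∑ a : Fin N,
        σ (Tensor.plucker x (Fin.snoc (fun r : Fin m => idx (Fin.castAdd m r)) a)) * M a b *
        Tensor.plucker x (Fin.cons b (fun r : Fin m => idx (Fin.natAdd m r))) := by
  simp only [Tensor.pProd, Tensor.ofMat, Tensor.map]
  rw [← Equiv.sum_comp (Equiv.funUnique (Fin 1) (Fin N)).symm]
  refine Finset.sum_congr rfl fun b _ => ?_
  rw [← Equiv.sum_comp (Equiv.funUnique (Fin 1) (Fin N)).symm, Finset.sum_mul]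
  refine Finset.sum_congr rfl fun a _ => ?_
  have harg1 : ∀ (f : Fin (m+1) → Fin N), (∀ i : Fin (m+1), ∀ h : (i:ℕ) < m, f i = idx ⟨i, by omega⟩)
      → (∀ i : Fin (m+1), (i:ℕ) = m → f i = a)
      → f = Fin.snoc (fun r : Fin m => idx (Fin.castAdd m r)) a := by
    intro f h1 h2
    funext i
    by_cases hi : (i:ℕ) < m
    · rw [h1 i hi]
      simp only [Fin.snoc, hi, dif_pos]
      rfl
    · rw [h2 i (by omega)]
      simp [Fin.snoc, hi]
  have harg2 : ∀ (f : Fin (m+1) → Fin N), f 0 = b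
      → (∀ r : Fin m, f r.succ = idx (Fin.natAdd m r))
      → f = Fin.cons b (fun r : Fin m => idx (Fin.natAdd m r)) := by
    intro f h1 h2
    funext j
    cases j using Fin.cases with
    | zero => rw [h1]; rfl
    | succ r => rw [h2 r]; rfl
  refine congrArg₂ _ (congrArg₂ _ (congrArg σ (congrArg _ (harg1 _ ?_ ?_))) ?_) (congrArg _ (harg2 _ ?_ ?_))
  · intro i hi
    simp only [show (i:ℕ) < m + 1 - 1 from by omega, dif_pos,
      show (i:ℕ) < m + 1 - 1 + (2-1) - 1 from by omega]
  · intro i hi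
    simp only [show ¬((i:ℕ) < m + 1 - 1) from by omega, dif_neg, not_false_iff]
    rfl
  · norm_num
  · norm_num
  · intro r
    have h1 : ¬ ((r.succ : ℕ) < 1) := by simp
    simp only [h1, dif_neg, not_false_iff]
    rfl

lemma aux_plucker_snoc' {m : ℕ} (x : Fin (m+1) → Fin N → F) (i : Fin m → Fin N) (a : Fin N) :
    plucker x (Fin.snoc i a) =
      ∑ s : Fin (m+1), (-1) ^ (m + (s : ℕ)) * x s a *
        plucker (fun c => x (s.succAbove c)) i := by
  rw [plucker, Matrix.det_succ_row _ (Fin.last m)]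
  refine Finset.sum_congr rfl fun s _ => ?_
  congr 1
  · simp [Fin.snoc_last, Fin.val_last]
  · rw [plucker]
    congr 1
    ext r c
    simp [Fin.succAbove_last, Fin.snoc_castSucc]

lemma aux_plucker_cons' {m : ℕ} (x : Fin (m+1) → Fin N → F) (j : Fin m → Fin N) (b : Fin N) :
    plucker x (Fin.cons b j) =
      ∑ t : Fin (m+1), (-1) ^ (t : ℕ) * x t b *
        plucker (fun c => x (t.succAbove c)) j := by
  rw [plucker, Matrix.det_succ_row_zero]
  refine Finset.sum_congr rfl fun t _ => ?_
  congr 1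

lemma aux_comm4 {m : ℕ} (f : Fin N → Fin N → Fin (m+1) → Fin (m+1) → F) :
    ∑ b : Fin N, ∑ a : Fin N, ∑ s : Fin (m+1), ∑ t : Fin (m+1), f b a s t
      = ∑ s : Fin (m+1), ∑ t : Fin (m+1), ∑ a : Fin N, ∑ b : Fin N, f b a s t := by
  calc ∑ b : Fin N, ∑ a : Fin N, ∑ s : Fin (m+1), ∑ t : Fin (m+1), f b a s t
      = ∑ b : Fin N, ∑ s : Fin (m+1), ∑ a : Fin N, ∑ t : Fin (m+1), f b a s t :=
        Finset.sum_congr rfl fun _ _ => Finset.sum_comm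
    _ = ∑ s : Fin (m+1), ∑ b : Fin N, ∑ a : Fin N, ∑ t : Fin (m+1), f b a s t :=
        Finset.sum_comm
    _ = ∑ s : Fin (m+1), ∑ b : Fin N, ∑ t : Fin (m+1), ∑ a : Fin N, f b a s t :=
        Finset.sum_congr rfl fun _ _ => Finset.sum_congr rfl fun _ _ => Finset.sum_comm
    _ = ∑ s : Fin (m+1), ∑ t : Fin (m+1), ∑ b : Fin N, ∑ a : Fin N, f b a s t :=
        Finset.sum_congr rfl fun _ _ => Finset.sum_comm
    _ = ∑ s : Fin (m+1), ∑ t : Fin (m+1), ∑ a : Fin N, ∑ b : Fin N, f b a s t :=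
        Finset.sum_congr rfl fun _ _ => Finset.sum_congr rfl fun _ _ => Finset.sum_comm

lemma aux_T_expand {m : ℕ} (σ : F →+* F) (M : Matrix (Fin N) (Fin N) F)
    (x : Fin (m+1) → Fin N → F) (idx : Fin (m + m) → Fin N) :
    Tensor.pProd (p := 1)
        (Tensor.pProd (p := 1) (Tensor.map σ (Tensor.plucker x)) (Tensor.ofMat M)
          (by omega) (by omega))
        (Tensor.plucker x) (by omega) (by omega) idx
    = ∑ s : Fin (m+1), ∑ t : Fin (m+1),
        ((-1) ^ (m + (s:ℕ)) * (-1) ^ ((t:ℕ)))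
        * (σ (plucker (fun c => x (s.succAbove c)) (fun r => idx (Fin.castAdd m r)))
            * plucker (fun c => x (t.succAbove c)) (fun r => idx (Fin.natAdd m r)))
        * Tensor.sesq σ M (x s) (x t) := by
  rw [aux_T_apply]
  simp only [aux_plucker_snoc', aux_plucker_cons', map_sum, map_mul, map_pow, map_neg, map_one,
    Tensor.sesq, Finset.sum_mul, Finset.mul_sum]
  rw [aux_comm4, Finset.sum_comm]
  refine Finset.sum_congr rfl fun s _ => Finset.sum_congr rfl fun t _ => Finset.sum_congr rfl
    fun a _ => Finset.sum_congr rfl fun b _ => ?_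
  ring

lemma aux_mul_eq_zero_left {n : ℕ} {A X : Matrix (Fin n) (Fin n) F}
    (hA : IsUnit A) (h : A * X = 0) : X = 0 := by
  obtain ⟨u, rfl⟩ := hA
  calc X = (↑u⁻¹ * ↑u) * X := by rw [Units.inv_mul, Matrix.one_mul]
  _ = ↑u⁻¹ * (↑u * X) := by rw [Matrix.mul_assoc]
  _ = 0 := by rw [h, Matrix.mul_zero]

lemma aux_mul_eq_zero_right {n : ℕ} {A X : Matrix (Fin n) (Fin n) F}
    (hA : IsUnit A) (h : X * A = 0) : X = 0 := by
  obtain ⟨u, rfl⟩ := hA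
  calc X = X * (↑u * ↑u⁻¹) := by rw [Units.mul_inv, Matrix.mul_one]
  _ = (X * ↑u) * ↑u⁻¹ := by rw [Matrix.mul_assoc]
  _ = 0 := by rw [h, Matrix.zero_mul]

end Aux

/-- When the Gram matrix `M_f` is invertible, for linearly independent
`x_1, …, x_k` with Plücker tensor `X`, the equation `X^σ ∘ M_f ∘ X = O` holds iff
`⟨x_1, …, x_k⟩` is totally `f`-isotropic. -/
theorem plucker_oneProd_gram_eq_zero_iff_totally_isotropic_of_nondegenerate
    {F : Type*} [Field F] {N k : ℕ} (hk : 2 ≤ k) (hkN : k ≤ N)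
    (σ : F ≃+* F) (hσ : ∀ a, σ (σ a) = a) (ε : F) (hε : ε = 1 ∨ ε = -1)
    (M : Matrix (Fin N) (Fin N) F) (hM : Mᵀ = ε • M.map σ) (hMinv : IsUnit M)
    (x : Fin k → Fin N → F) (hx : LinearIndependent F x) :
    Tensor.pProd (p := 1)
        (Tensor.pProd (p := 1) (Tensor.map σ (Tensor.plucker x)) (Tensor.ofMat M)
          (by omega) (by omega))
        (Tensor.plucker x) (by omega) (by omega) = 0 ↔
      ∀ w₁ ∈ Submodule.span F (Set.range x), ∀ w₂ ∈ Submodule.span F (Set.range x),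
        Tensor.sesq σ M w₁ w₂ = 0 := by
  obtain ⟨m, rfl⟩ : ∃ m, k = m + 1 := ⟨k - 1, by omega⟩
  set σh : F →+* F := (σ : F →+* F) with hσh
  constructor
  · intro hT
    -- entrywise identity, evaluated everywhere
    have key : ∀ idx : Fin (m + m) → Fin N,
        (∑ s : Fin (m+1), ∑ t : Fin (m+1),
          ((-1) ^ (m + (s:ℕ)) * (-1) ^ ((t:ℕ)))
          * (σh (Tensor.plucker (fun c => x (s.succAbove c)) (fun r => idx (Fin.castAdd m r)))
              * Tensor.plucker (fun c => x (t.succAbove c)) (fun r => idx (Fin.natAdd m r)))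
          * Tensor.sesq σh M (x s) (x t)) = 0 :=
      fun idx => (aux_T_expand σh M x idx).symm.trans (congrFun hT idx)
    obtain ⟨ρ, hρ⟩ := aux_exists_rows x hx
    set B : Matrix (Fin (m+1)) (Fin (m+1)) F := Matrix.of fun r s => x s (ρ r) with hB
    set d : Fin (m+1) → F := fun i => (-1 : F) ^ (i : ℕ) with hd
    set Dg : Matrix (Fin (m+1)) (Fin (m+1)) F := Matrix.diagonal d with hDg
    set U : Matrix (Fin (m+1)) (Fin (m+1)) F :=
      Matrix.of (fun a s => σh (Tensor.plucker (fun c => x (s.succAbove c))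
        (fun r => ρ (a.succAbove r)))) with hU
    set W : Matrix (Fin (m+1)) (Fin (m+1)) F :=
      Matrix.of (fun t b => Tensor.plucker (fun c => x (t.succAbove c))
        (fun r => ρ (b.succAbove r))) with hW
    set K : Matrix (Fin (m+1)) (Fin (m+1)) F :=
      Matrix.of (fun s t => ((-1) ^ (m + (s:ℕ)) * (-1) ^ ((t:ℕ)))
        * Tensor.sesq σh M (x s) (x t)) with hK
    have hUKW : U * (K * W) = 0 := by
      ext a b
      have hkey := key (Fin.append (fun r => ρ (a.succAbove r)) (fun r => ρ (b.succAbove r)))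
      simp only [Fin.append_left, Fin.append_right] at hkey
      rw [Matrix.zero_apply, Matrix.mul_apply]
      simp_rw [Matrix.mul_apply, Finset.mul_sum]
      refine Eq.trans ?_ hkey
      refine Finset.sum_congr rfl fun s _ => Finset.sum_congr rfl fun t _ => ?_
      rw [hU, hK, hW]
      simp only [Matrix.of_apply]
      ring
    have hBdet : B.det ≠ 0 := by
      intro h
      rw [Matrix.isUnit_iff_isUnit_det, h] at hρ
      exact (not_isUnit_zero : ¬ IsUnit (0:F)) hρ
    have hDgdet : Dg.det ≠ 0 := by
      rw [hDg, Matrix.det_diagonal]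
      exact Finset.prod_ne_zero_iff.mpr fun i _ => pow_ne_zero _ (by norm_num)
    have hadjdet : B.adjugate.det ≠ 0 := by
      rw [Matrix.det_adjugate]
      exact pow_ne_zero _ hBdet
    -- adjugate B = Dg * W * Dg
    have hAdj : B.adjugate = Dg * W * Dg := by
      ext t b
      rw [Matrix.mul_diagonal, Matrix.diagonal_mul, Matrix.adjugate_fin_succ_eq_det_submatrix]
      rw [show W t b = (B.submatrix b.succAbove t.succAbove).det from rfl]
      rw [pow_add]
      ring
    have hWdet : W.det ≠ 0 := by
      intro h
      apply hadjdet
      rw [hAdj, Matrix.det_mul, Matrix.det_mul, h, mul_zero, zero_mul]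
    -- V and U
    set V : Matrix (Fin (m+1)) (Fin (m+1)) F :=
      Matrix.of (fun a s => (B.submatrix a.succAbove s.succAbove).det) with hV
    have hAdjT : B.adjugateᵀ = Dg * V * Dg := by
      ext a s
      rw [Matrix.mul_diagonal, Matrix.diagonal_mul, Matrix.transpose_apply,
        Matrix.adjugate_fin_succ_eq_det_submatrix]
      rw [show V a s = (B.submatrix a.succAbove s.succAbove).det from rfl]
      rw [pow_add]
      ring
    have hVdet : V.det ≠ 0 := by
      intro h
      apply hadjdet
      rw [← Matrix.det_transpose B.adjugate, hAdjT, Matrix.det_mul, Matrix.det_mul, h,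
        mul_zero, zero_mul]
    have hUV : U = σh.mapMatrix V := by
      ext a s
      rfl
    have hUdet : U.det ≠ 0 := by
      rw [hUV, ← RingHom.map_det]
      intro h
      exact hVdet (σ.injective (by rw [hσh] at h; simpa using h))
    -- cancel
    have hKW : K * W = 0 :=
      aux_mul_eq_zero_left ((Matrix.isUnit_iff_isUnit_det U).mpr (isUnit_iff_ne_zero.mpr hUdet))
        hUKW
    have hK0 : K = 0 :=
      aux_mul_eq_zero_right ((Matrix.isUnit_iff_isUnit_det W).mpr (isUnit_iff_ne_zero.mpr hWdet))
        hKW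
    have hG : ∀ s t, Tensor.sesq σh M (x s) (x t) = 0 := by
      intro s t
      have h := congrFun (congrFun (congrArg (fun (X : Matrix (Fin (m+1)) (Fin (m+1)) F) => (X : Matrix _ _ F)) hK0) s) t
      rw [hK] at h
      simp only [Matrix.of_apply, Matrix.zero_apply] at h
      rcases mul_eq_zero.mp h with h' | h'
      · exact absurd h' (mul_ne_zero (pow_ne_zero _ (by norm_num)) (pow_ne_zero _ (by norm_num)))
      · exact h'
    exact aux_sesq_span σh M x hG
  · intro hiso
    funext idx
    refine (aux_T_expand σh M x idx).trans ?_
    refine Finset.sum_eq_zero fun s _ => Finset.sum_eq_zero fun t _ => ?_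
    have h0 : Tensor.sesq (⇑σh) M (x s) (x t) = 0 :=
      hiso (x s) (Submodule.subset_span ⟨s, rfl⟩) (x t) (Submodule.subset_span ⟨t, rfl⟩)
    rw [h0, mul_zero]
end

section
/- Let ξ_1,...,ξ_k be linearly independent linear functionals on F^N (identified with the row vectors of their coordinates) and x_1,...,x_k linearly independent vectors of F^N, with k ≥ 2. Let Ξ = X(ξ_1,...,ξ_k) and X = X(x_1,...,x_k) be the corresponding Plücker tensors of degree k. Then Ξ ∘ X = O, where O is the null tensor of degree 2k−2, if and only if ⟨x_1,...,x_k⟩ ⊆ ∩_{i=1}^k Ker(ξ_i), i.e. ξ_i(x_j) = 0 for all i,j ∈ {1,...,k}. -/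
open scoped BigOperators Matrix

open Matrix Finset

namespace PluckerAux

variable {F : Type*} [Field F] {N : ℕ}

/-- Dual family for a linearly independent family of row vectors. -/
lemma exists_dual {k : ℕ} (ξ : Fin k → Fin N → F) (hξ : LinearIndependent F ξ) :
    ∃ v : Fin k → Fin N → F, ∀ s t, ∑ m, ξ s m * v t m = if s = t then 1 else 0 := by
  classical
  let ψ : (Fin k → F) →ₗ[F] (Fin N → F) :=
    { toFun := fun c => ∑ s, c s • ξ s
      map_add' := fun c c' => by
        simp [add_smul, Finset.sum_add_distrib]
      map_smul' := fun a c => by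
        simp [smul_smul, Finset.smul_sum] }
  have hψ : Function.Injective ψ := by
    rw [← LinearMap.ker_eq_bot, LinearMap.ker_eq_bot']
    intro c hc
    have h0 := Fintype.linearIndependent_iff.mp hξ c hc
    funext s; exact h0 s
  have hsurj := LinearMap.dualMap_surjective_of_injective hψ
  choose η hη using fun t => hsurj (LinearMap.proj t)
  refine ⟨fun t m => η t (Pi.single m 1), fun s t => ?_⟩
  have h1 : (ξ s : Fin N → F) = ∑ m, (ξ s m) • (Pi.single m 1 : Fin N → F) := by
    funext m'
    simp [Pi.single_apply]
  have h2 : ψ (Pi.single s 1) = ξ s := by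
    simp only [ψ, LinearMap.coe_mk, AddHom.coe_mk]
    funext m'
    rw [Finset.sum_apply]
    simp [Pi.single_apply, ite_smul]
  calc ∑ m, ξ s m * η t (Pi.single m 1)
      = η t (ξ s) := by
        conv_rhs => rw [h1]
        rw [map_sum]
        simp [smul_eq_mul]
    _ = (ψ.dualMap (η t)) (Pi.single s 1) := by
        simp [LinearMap.dualMap_apply, h2]
    _ = if s = t then 1 else 0 := by
        rw [hη t]
        simp [Pi.single_apply, eq_comm]

end PluckerAux

namespace PluckerAux

variable {F : Type*} [Field F] {N : ℕ}

lemma single_expand {n : ℕ} (c : Fin n → F) : c = ∑ s0, c s0 • (Pi.single s0 1 : Fin n → F) := by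
  funext m
  rw [Finset.sum_apply]
  simp [Pi.single_apply]

lemma det_updateRow_expand {n : ℕ} (A : Matrix (Fin n) (Fin n) F) (p : Fin n) (c : Fin n → F) :
    (A.updateRow p c).det = ∑ s0, c s0 * (A.updateRow p (Pi.single s0 1)).det := by
  conv_lhs => rw [single_expand c]
  rw [show (A.updateRow p (∑ s0, c s0 • (Pi.single s0 1 : Fin n → F))).det
      = (Matrix.detRowAlternating : ((Fin n → F) [⋀^Fin n]→ₗ[F] F)).toMultilinearMap
          (Function.update (A : Fin n → Fin n → F) p
            (∑ s0, c s0 • (Pi.single s0 1 : Fin n → F))) from rfl]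
  erw [MultilinearMap.map_update_sum]
  refine Finset.sum_congr rfl fun s0 _ => ?_
  rw [show (Matrix.detRowAlternating : ((Fin n → F) [⋀^Fin n]→ₗ[F] F)).toMultilinearMap
        (Function.update (A : Fin n → Fin n → F) p (c s0 • (Pi.single s0 1 : Fin n → F)))
      = (A.updateRow p (c s0 • (Pi.single s0 1 : Fin n → F))).det from rfl,
    Matrix.det_updateRow_smul]

lemma permMatrix_row {n : ℕ} (σ : Equiv.Perm (Fin n)) (r : Fin n) :
    (σ.permMatrix F) r = Pi.single (σ r) (1:F) := by
  funext s
  simp [Equiv.Perm.permMatrix, PEquiv.toMatrix, Equiv.toPEquiv, Pi.single_apply, eq_comm]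

lemma det_updateRow_permMatrix {n : ℕ} (σ : Equiv.Perm (Fin n)) (p : Fin n) (c : Fin n → F) :
    ((σ.permMatrix F).updateRow p c).det = ((Equiv.Perm.sign σ : ℤ) : F) * c (σ p) := by
  have hc : (∑ kk, (c (σ kk)) • (σ.permMatrix F) kk) = c := by
    funext s
    rw [Finset.sum_apply]
    simp only [permMatrix_row, Pi.smul_apply]
    rw [Equiv.sum_comp σ (fun s0 => c s0 • (Pi.single s0 1 : Fin n → F) s)]
    simp [Pi.single_apply]
  conv_lhs => rw [← hc]
  rw [Matrix.det_updateRow_sum, Matrix.det_permutation]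
  rw [smul_eq_mul, mul_comm]


lemma contract_snoc {n : ℕ} (g : Fin N → Fin (n+1) → F) (c : Fin n → Fin N → F)
    (L : Fin (n+1) → F) :
    ∑ a : Fin n → Fin N, (∏ r, c r (a r)) *
        (Matrix.of (Fin.snoc (fun r => g (a r)) L : Fin (n+1) → Fin (n+1) → F)).det
      = (Matrix.of (Fin.snoc (fun r => ∑ m, c r m • g m) L : Fin (n+1) → Fin (n+1) → F)).det := by
  classical
  let f : MultilinearMap F (fun _ : Fin (n+1) => (Fin (n+1) → F)) F :=
    (Matrix.detRowAlternating : ((Fin (n+1) → F) [⋀^Fin (n+1)]→ₗ[F] F)).toMultilinearMap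
  let f' : MultilinearMap F (fun _ : Fin n => (Fin (n+1) → F)) F :=
    (LinearMap.applyₗ L).compMultilinearMap f.curryRight
  have hf' : ∀ rows : Fin n → (Fin (n+1) → F),
      f' rows = (Matrix.of (Fin.snoc rows L : Fin (n+1) → Fin (n+1) → F)).det :=
    fun rows => rfl
  calc ∑ a : Fin n → Fin N, (∏ r, c r (a r)) *
        (Matrix.of (Fin.snoc (fun r => g (a r)) L : Fin (n+1) → Fin (n+1) → F)).det
      = ∑ a : Fin n → Fin N, f' (fun r => c r (a r) • g (a r)) := by
        refine Finset.sum_congr rfl fun a _ => ?_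
        rw [f'.map_smul_univ, hf', smul_eq_mul]
    _ = f' (fun r => ∑ m, c r m • g m) := (f'.map_sum (g := fun r m => c r m • g m)).symm
    _ = _ := hf' _

lemma contract_cons {n : ℕ} (g : Fin N → Fin (n+1) → F) (c : Fin n → Fin N → F)
    (L : Fin (n+1) → F) :
    ∑ b : Fin n → Fin N, (∏ r, c r (b r)) *
        (Matrix.of (Fin.cons L (fun r => g (b r)) : Fin (n+1) → Fin (n+1) → F)).det
      = (Matrix.of (Fin.cons L (fun r => ∑ m, c r m • g m) : Fin (n+1) → Fin (n+1) → F)).det := by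
  classical
  let f : MultilinearMap F (fun _ : Fin (n+1) => (Fin (n+1) → F)) F :=
    (Matrix.detRowAlternating : ((Fin (n+1) → F) [⋀^Fin (n+1)]→ₗ[F] F)).toMultilinearMap
  let f' : MultilinearMap F (fun _ : Fin n => (Fin (n+1) → F)) F := f.curryLeft L
  have hf' : ∀ rows : Fin n → (Fin (n+1) → F),
      f' rows = (Matrix.of (Fin.cons L rows : Fin (n+1) → Fin (n+1) → F)).det :=
    fun rows => rfl
  calc ∑ b : Fin n → Fin N, (∏ r, c r (b r)) *
        (Matrix.of (Fin.cons L (fun r => g (b r)) : Fin (n+1) → Fin (n+1) → F)).det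
      = ∑ b : Fin n → Fin N, f' (fun r => c r (b r) • g (b r)) := by
        refine Finset.sum_congr rfl fun b _ => ?_
        rw [f'.map_smul_univ, hf', smul_eq_mul]
    _ = f' (fun r => ∑ m, c r m • g m) := (f'.map_sum (g := fun r m => c r m • g m)).symm
    _ = _ := hf' _

lemma updateRow_snoc {n : ℕ} (rows : Fin n → Fin (n+1) → F) (z L : Fin (n+1) → F) :
    (Matrix.of (Fin.snoc rows z : Fin (n+1) → Fin (n+1) → F)).updateRow (Fin.last n) L
      = Matrix.of (Fin.snoc rows L : Fin (n+1) → Fin (n+1) → F) := by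
  ext r s
  refine Fin.lastCases ?_ (fun r' => ?_) r
  · rw [Matrix.updateRow_self]
    simp
  · rw [Matrix.updateRow_ne (Fin.castSucc_lt_last r').ne]
    simp

lemma updateRow_cons {n : ℕ} (rows : Fin n → Fin (n+1) → F) (z L : Fin (n+1) → F) :
    (Matrix.of (Fin.cons z rows : Fin (n+1) → Fin (n+1) → F)).updateRow 0 L
      = Matrix.of (Fin.cons L rows : Fin (n+1) → Fin (n+1) → F) := by
  ext r s
  refine Fin.cases ?_ (fun r' => ?_) r
  · rw [Matrix.updateRow_self]
    simp
  · rw [Matrix.updateRow_ne (Fin.succ_ne_zero r')]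
    simp


lemma sum_swap_zero {α β γ : Type*} [Fintype α] [Fintype β] [Fintype γ]
    (f : α → γ → F) (g : β → γ → F)
    (h : ∀ a b, ∑ c, f a c * g b c = 0) :
    ∑ c, (∑ a, f a c) * (∑ b, g b c) = 0 := by
  calc ∑ c, (∑ a, f a c) * (∑ b, g b c)
      = ∑ c, ∑ a, ∑ b, f a c * g b c := by
        refine Finset.sum_congr rfl fun c _ => ?_
        rw [Finset.sum_mul_sum]
    _ = ∑ a, ∑ c, ∑ b, f a c * g b c := Finset.sum_comm
    _ = ∑ a, ∑ b, ∑ c, f a c * g b c := by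
        refine Finset.sum_congr rfl fun a _ => Finset.sum_comm
    _ = 0 := by
        refine Finset.sum_eq_zero fun a _ => Finset.sum_eq_zero fun b _ => h a b

lemma plucker_snoc {K : ℕ} (ξ : Fin (K+1) → Fin N → F) (a : Fin K → Fin N) (h0 : Fin N) :
    Tensor.plucker ξ (Fin.snoc a h0)
      = (Matrix.of (Fin.snoc (fun r => (fun s => ξ s (a r))) (fun s => ξ s h0)
          : Fin (K+1) → Fin (K+1) → F)).det := by
  rw [Tensor.plucker]
  congr 1
  funext r s
  refine Fin.lastCases ?_ (fun r' => ?_) r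
  · simp
  · simp

lemma plucker_cons {K : ℕ} (x : Fin (K+1) → Fin N → F) (b : Fin K → Fin N) (h0 : Fin N) :
    Tensor.plucker x (Fin.cons h0 b)
      = (Matrix.of (Fin.cons (fun s => x s h0) (fun r => (fun s => x s (b r)))
          : Fin (K+1) → Fin (K+1) → F)).det := by
  rw [Tensor.plucker]
  congr 1
  funext r s
  refine Fin.cases ?_ (fun r' => ?_) r
  · simp
  · simp

lemma pProd_plucker_apply {K : ℕ} (ξ x : Fin (K+1) → Fin N → F)
    (hpr : 1 ≤ K + 1) (hps : 1 ≤ K + 1) (idx : Fin (K + K) → Fin N) :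
    Tensor.pProd (p := 1) (Tensor.plucker ξ) (Tensor.plucker x) hpr hps idx
      = ∑ h0 : Fin N,
          Tensor.plucker ξ (Fin.snoc (fun r : Fin K => idx ⟨r.1, by omega⟩) h0)
          * Tensor.plucker x (Fin.cons h0 (fun r : Fin K => idx ⟨K + r.1, by omega⟩)) := by
  classical
  unfold Tensor.pProd
  refine Fintype.sum_equiv (Equiv.funUnique (Fin 1) (Fin N)) _ _ fun h => ?_
  congr 1
  · congr 1
    funext i
    refine Fin.lastCases ?_ (fun i' => ?_) i
    · rw [Fin.snoc_last, dif_neg (by simp)]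
      exact congrArg h (Subsingleton.elim _ _)
    · rw [Fin.snoc_castSucc, dif_pos (by simpa using i'.isLt)]
      rfl
  · congr 1
    funext i
    refine Fin.cases ?_ (fun i' => ?_) i
    · rw [Fin.cons_zero, dif_pos (by norm_num)]
      exact congrArg h (Subsingleton.elim _ _)
    · rw [Fin.cons_succ, dif_neg (by simp)]
      exact congrArg idx (Fin.ext (by simp))

end PluckerAux

/-- For linearly independent functionals `ξ_1, …, ξ_k` (as row vectors) and
linearly independent `x_1, …, x_k ∈ F^N` with Plücker tensors `Ξ` and `X`, one has
`Ξ ∘ X = O` iff `⟨x_1, …, x_k⟩ ⊆ ⋂ᵢ Ker ξᵢ`, i.e. `ξᵢ(xⱼ) = 0` for all `i, j`. -/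
theorem plucker_oneProd_plucker_eq_zero_iff
    {F : Type*} [Field F] {N k : ℕ} (hk : 2 ≤ k)
    (ξ x : Fin k → Fin N → F)
    (hξ : LinearIndependent F ξ) (hx : LinearIndependent F x) :
    Tensor.pProd (p := 1) (Tensor.plucker ξ) (Tensor.plucker x) (by omega) (by omega) = 0 ↔
      ∀ i j : Fin k, ∑ m, ξ i m * x j m = 0 := by
  classical
  obtain ⟨K, rfl⟩ : ∃ K, k = K + 1 := ⟨k - 1, by omega⟩
  constructor
  · -- forward direction
    intro H i j
    obtain ⟨v, hv⟩ := PluckerAux.exists_dual ξ hξ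
    obtain ⟨w, hw⟩ := PluckerAux.exists_dual x hx
    set σ₁ : Equiv.Perm (Fin (K+1)) :=
      (finSuccEquiv' (Fin.last K)).trans (finSuccEquiv' i).symm with hσ₁
    set σ₂ : Equiv.Perm (Fin (K+1)) :=
      (finSuccEquiv' (0 : Fin (K+1))).trans (finSuccEquiv' j).symm with hσ₂
    have hσ₁last : σ₁ (Fin.last K) = i := by
      rw [hσ₁]
      simp only [Equiv.trans_apply, finSuccEquiv'_at, finSuccEquiv'_symm_none]
    have hσ₁cast : ∀ r : Fin K, σ₁ (Fin.castSucc r) = i.succAbove r := by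
      intro r
      have h1 : Fin.castSucc r = (Fin.last K).succAbove r := by
        rw [Fin.succAbove_last]
      rw [hσ₁, h1]
      simp only [Equiv.trans_apply, finSuccEquiv'_succAbove, finSuccEquiv'_symm_some]
    have hσ₂zero : σ₂ (0 : Fin (K+1)) = j := by
      rw [hσ₂]
      simp only [Equiv.trans_apply, finSuccEquiv'_at, finSuccEquiv'_symm_none]
    have hσ₂succ : ∀ r : Fin K, σ₂ (Fin.succ r) = j.succAbove r := by
      intro r
      have h1 : Fin.succ r = (0 : Fin (K+1)).succAbove r := by
        rw [Fin.succAbove_zero]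
      rw [hσ₂, h1]
      simp only [Equiv.trans_apply, finSuccEquiv'_succAbove, finSuccEquiv'_symm_some]
    have key : ∀ a b : Fin K → Fin N,
        ∑ h0 : Fin N, Tensor.plucker ξ (Fin.snoc a h0) * Tensor.plucker x (Fin.cons h0 b) = 0 := by
      intro a b
      have hz := congrFun H (Fin.append a b)
      rw [PluckerAux.pProd_plucker_apply] at hz
      have ha : (fun r : Fin K => Fin.append a b ⟨r.1, by omega⟩) = a := by
        funext r
        exact congrArg (Fin.append a b) (Fin.ext rfl) |>.trans (Fin.append_left a b r)
      have hb : (fun r : Fin K => Fin.append a b ⟨K + r.1, by omega⟩) = b := by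
        funext r
        exact congrArg (Fin.append a b) (Fin.ext rfl) |>.trans (Fin.append_right a b r)
      rw [ha, hb] at hz
      simpa using hz
    have D1 : ∀ h0 : Fin N,
        (∑ a : Fin K → Fin N, (∏ r, v (i.succAbove r) (a r)) * Tensor.plucker ξ (Fin.snoc a h0))
          = ((Equiv.Perm.sign σ₁ : ℤ) : F) * ξ i h0 := by
      intro h0
      simp only [PluckerAux.plucker_snoc]
      rw [PluckerAux.contract_snoc (g := fun m => (fun s => ξ s m))
        (c := fun r => v (i.succAbove r)) (L := fun s => ξ s h0)]
      have hmat : (Matrix.of (Fin.snoc (fun r => ∑ m, v (i.succAbove r) m • (fun s => ξ s m))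
            (fun s => ξ s h0) : Fin (K+1) → Fin (K+1) → F))
          = (σ₁.permMatrix F).updateRow (Fin.last K) (fun s => ξ s h0) := by
        ext r s
        refine Fin.lastCases ?_ (fun r' => ?_) r
        · rw [Matrix.updateRow_self]
          simp
        · rw [Matrix.updateRow_ne (Fin.castSucc_lt_last r').ne]
          have lhs1 : (Matrix.of (Fin.snoc (fun r => ∑ m, v (i.succAbove r) m • (fun s => ξ s m))
              (fun s => ξ s h0) : Fin (K+1) → Fin (K+1) → F)) (Fin.castSucc r') s
              = ∑ m, ξ s m * v (i.succAbove r') m := by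
            simp [Fin.snoc_castSucc, mul_comm]
          rw [lhs1, hv s (i.succAbove r'), PluckerAux.permMatrix_row, hσ₁cast]
          simp [Pi.single_apply]
      rw [hmat, PluckerAux.det_updateRow_permMatrix, hσ₁last]
    have D2 : ∀ h0 : Fin N,
        (∑ b : Fin K → Fin N, (∏ r, w (j.succAbove r) (b r)) * Tensor.plucker x (Fin.cons h0 b))
          = ((Equiv.Perm.sign σ₂ : ℤ) : F) * x j h0 := by
      intro h0
      simp only [PluckerAux.plucker_cons]
      rw [PluckerAux.contract_cons (g := fun m => (fun s => x s m))
        (c := fun r => w (j.succAbove r)) (L := fun s => x s h0)]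
      have hmat : (Matrix.of (Fin.cons (fun s => x s h0)
            (fun r => ∑ m, w (j.succAbove r) m • (fun s => x s m)) : Fin (K+1) → Fin (K+1) → F))
          = (σ₂.permMatrix F).updateRow 0 (fun s => x s h0) := by
        ext r s
        refine Fin.cases ?_ (fun r' => ?_) r
        · rw [Matrix.updateRow_self]
          simp
        · rw [Matrix.updateRow_ne (Fin.succ_ne_zero r')]
          have lhs1 : (Matrix.of (Fin.cons (fun s => x s h0)
              (fun r => ∑ m, w (j.succAbove r) m • (fun s => x s m)) : Fin (K+1) → Fin (K+1) → F))
                (Fin.succ r') s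
              = ∑ m, x s m * w (j.succAbove r') m := by
            simp [Fin.cons_succ, mul_comm]
          rw [lhs1, hw s (j.succAbove r'), PluckerAux.permMatrix_row, hσ₂succ]
          simp [Pi.single_apply]
      rw [hmat, PluckerAux.det_updateRow_permMatrix, hσ₂zero]
    have T0 : ∑ h0 : Fin N,
        (∑ a : Fin K → Fin N, (∏ r, v (i.succAbove r) (a r)) * Tensor.plucker ξ (Fin.snoc a h0))
        * (∑ b : Fin K → Fin N, (∏ r, w (j.succAbove r) (b r)) * Tensor.plucker x (Fin.cons h0 b))
        = 0 := by
      refine PluckerAux.sum_swap_zero _ _ fun a b => ?_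
      have : ∑ h0 : Fin N,
          ((∏ r, v (i.succAbove r) (a r)) * Tensor.plucker ξ (Fin.snoc a h0))
          * ((∏ r, w (j.succAbove r) (b r)) * Tensor.plucker x (Fin.cons h0 b))
          = ((∏ r, v (i.succAbove r) (a r)) * (∏ r, w (j.succAbove r) (b r)))
            * ∑ h0 : Fin N, Tensor.plucker ξ (Fin.snoc a h0) * Tensor.plucker x (Fin.cons h0 b) := by
        rw [Finset.mul_sum]
        exact Finset.sum_congr rfl fun h0 _ => by ring
      rw [this, key a b, mul_zero]
    simp only [D1, D2] at T0
    have hs1 : ((Equiv.Perm.sign σ₁ : ℤ) : F) ≠ 0 := by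
      rcases Int.units_eq_one_or (Equiv.Perm.sign σ₁) with h | h <;> simp [h]
    have hs2 : ((Equiv.Perm.sign σ₂ : ℤ) : F) ≠ 0 := by
      rcases Int.units_eq_one_or (Equiv.Perm.sign σ₂) with h | h <;> simp [h]
    have T1 : (((Equiv.Perm.sign σ₁ : ℤ) : F) * ((Equiv.Perm.sign σ₂ : ℤ) : F))
        * (∑ m, ξ i m * x j m) = 0 := by
      rw [Finset.mul_sum, ← T0]
      exact Finset.sum_congr rfl fun m _ => by ring
    exact (mul_eq_zero.mp T1).resolve_left (mul_ne_zero hs1 hs2)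
  · -- converse direction
    intro H
    funext idx
    simp only [Pi.zero_apply]
    rw [PluckerAux.pProd_plucker_apply]
    have hgen : ∀ a b : Fin K → Fin N,
        ∑ h0 : Fin N, Tensor.plucker ξ (Fin.snoc a h0) * Tensor.plucker x (Fin.cons h0 b) = 0 := by
      intro a b
      have hexp1 : ∀ h0 : Fin N, Tensor.plucker ξ (Fin.snoc a h0)
          = ∑ s0, ξ s0 h0 *
            ((Matrix.of (Fin.snoc (fun r => (fun s => ξ s (a r))) (0 : Fin (K+1) → F)
              : Fin (K+1) → Fin (K+1) → F)).updateRow (Fin.last K) (Pi.single s0 1)).det := by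
        intro h0
        rw [PluckerAux.plucker_snoc, ← PluckerAux.updateRow_snoc (fun r => (fun s => ξ s (a r)))
          (0 : Fin (K+1) → F) (fun s => ξ s h0), PluckerAux.det_updateRow_expand]
      have hexp2 : ∀ h0 : Fin N, Tensor.plucker x (Fin.cons h0 b)
          = ∑ t0, x t0 h0 *
            ((Matrix.of (Fin.cons (0 : Fin (K+1) → F) (fun r => (fun s => x s (b r)))
              : Fin (K+1) → Fin (K+1) → F)).updateRow 0 (Pi.single t0 1)).det := by
        intro h0
        rw [PluckerAux.plucker_cons, ← PluckerAux.updateRow_cons (fun r => (fun s => x s (b r)))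
          (0 : Fin (K+1) → F) (fun s => x s h0), PluckerAux.det_updateRow_expand]
      simp only [hexp1, hexp2]
      refine PluckerAux.sum_swap_zero _ _ fun s0 t0 => ?_
      have : ∀ C D : F, ∑ h0 : Fin N, (ξ s0 h0 * C) * (x t0 h0 * D)
          = (C * D) * ∑ h0 : Fin N, ξ s0 h0 * x t0 h0 := by
        intro C D
        rw [Finset.mul_sum]
        exact Finset.sum_congr rfl fun h0 _ => by ring
      rw [this, H s0 t0, mul_zero]
    exact hgen _ _
end

section
/- Let A and B be N×N matrices over F and let r be a positive integer. Then (⊙^r B) ∘_r (⊙^r A) = ⊙^r (BA), where BA is the usual row-times-column matrix product. -/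
open scoped BigOperators Matrix

lemma pPow_apply {F : Type*} [Field F] {N : ℕ} (A : Matrix (Fin N) (Fin N) F) :
    ∀ (r : ℕ) (idx : Fin (2 * r) → Fin N),
      Tensor.pPow (Tensor.ofMat A) r idx
        = ∏ i : Fin r, A (idx ⟨i, by omega⟩) (idx ⟨r + i, by have := i.isLt; omega⟩) := by
  intro r
  induction r with
  | zero => intro idx; simp [Tensor.pPow]
  | succ r ih =>
    intro idx
    rw [Tensor.pPow, Tensor.pseudoProd, ih, Fin.prod_univ_castSucc]
    congr 1
    · apply Finset.prod_congr rfl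
      intro i _
      have h1 : ((⟨(i : ℕ), by omega⟩ : Fin (2 * r)) : ℕ) < r := by
        simp
      have h2 : ¬ ((⟨r + (i : ℕ), by have := i.isLt; omega⟩ : Fin (2 * r)) : ℕ) < r := by simp
      rw [dif_pos h1, dif_neg h2]
      refine congrArg₂ A ?_ ?_ <;> (apply congrArg; apply Fin.ext; simp; try omega)
    · simp only [Tensor.ofMat]
      have h0 : ((0 : Fin 2) : ℕ) < 1 := by norm_num
      have h1 : ¬ ((1 : Fin 2) : ℕ) < 1 := by norm_num
      rw [dif_pos h0, dif_neg h1]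
      refine congrArg₂ A ?_ ?_ <;> (apply congrArg; apply Fin.ext; simp; try omega)

/-- `(⊙^r B) ∘_r (⊙^r A) = ⊙^r (BA)` for matrices `A, B` and a positive
integer `r`. -/
theorem pProd_pPow_pPow_eq_pPow_mul
    {F : Type*} [Field F] {N : ℕ} (A B : Matrix (Fin N) (Fin N) F) (r : ℕ) (hr : 1 ≤ r) :
    Tensor.cast (by omega)
        (Tensor.pProd (p := r) (Tensor.pPow (Tensor.ofMat B) r) (Tensor.pPow (Tensor.ofMat A) r)
          (by omega) (by omega)) =
      Tensor.pPow (Tensor.ofMat (B * A)) r := by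
  funext idx
  simp only [Tensor.cast, Tensor.pProd, pPow_apply, Matrix.mul_apply]
  rw [Finset.prod_univ_sum]
  rw [← Fintype.piFinset_univ]
  apply Finset.sum_congr rfl
  intro h _
  rw [← Finset.prod_mul_distrib]
  apply Finset.prod_congr rfl
  intro i _
  have hB1 : ((⟨(i : ℕ), by omega⟩ : Fin (2 * r)) : ℕ) < 2 * r - r := by simp; omega
  have hB2 : ¬ ((⟨r + (i : ℕ), by have := i.isLt; omega⟩ : Fin (2 * r)) : ℕ) < 2 * r - r := by
    simp; omega
  have hA1 : ((⟨(i : ℕ), by omega⟩ : Fin (2 * r)) : ℕ) < r := by simp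
  have hA2 : ¬ ((⟨r + (i : ℕ), by have := i.isLt; omega⟩ : Fin (2 * r)) : ℕ) < r := by simp
  rw [dif_pos hB1, dif_neg hB2, dif_pos hA1, dif_neg hA2]
  refine congrArg₂ (· * ·) (congrArg₂ B ?_ ?_) (congrArg₂ A ?_ ?_) <;>
    (apply congrArg; apply Fin.ext; simp; try omega)
end
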